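/- For any index i ∈ [1,n], pss(i) is an element of the PSS closure of i−1; more precisely, pss(i) = max{j ∈ P_{i−1} : S_j ≺ S_i}, where P_0 = {0} and P_j = {j} ∪ P_{pss(j)}. -/

import Mathlib

variable {α : Type*} [LinearOrder α]

/-- A Lyndon word: nonempty and strictly smaller than all of its proper nonempty suffixes. -/
def IsLyndon (s : List α) : Prop :=
  s ≠ [] ∧ ∀ i, 0 < i → i < s.length → List.Lex (· < ·) s (s.drop i)

/-- The `i`-th suffix of `S` (1-indexed); `sfx S 0 = []` plays the role of the sentinel
suffix `S₀ = $`, and `sfx S (n+1) = []` plays the role of `S_{n+1} = $`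
(the empty list is lexicographically smaller than every nonempty list). -/
def sfx (S : List α) (i : ℕ) : List α := if i = 0 then [] else S.drop (i - 1)

open scoped Classical in
/-- `pss S j = max {k ∈ [0,j) : S_k ≺ S_j}`. -/
noncomputable def pss (S : List α) (j : ℕ) : ℕ :=
  Nat.findGreatest (fun k => List.Lex (· < ·) (sfx S k) (sfx S j)) (j - 1)

/-- `nss S i = min {j ∈ (i, n+1] : S_j ≺ S_i}`. -/
noncomputable def nss (S : List α) (i : ℕ) : ℕ :=
  sInf {j | i < j ∧ j ≤ S.length + 1 ∧ List.Lex (· < ·) (sfx S j) (sfx S i)}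

/-- Length of the longest common prefix of two lists. -/
def lcp : List α → List α → ℕ
  | a :: s, b :: t => if a = b then lcp s t + 1 else 0
  | _, _ => 0

/-- The PSS closure: all iterates of `pss` starting from `j`. -/
noncomputable def pssClosure (S : List α) (j : ℕ) : Set ℕ :=
  {k | ∃ m, (pss S)^[m] j = k}

open scoped Classical in
/-- Size of the subtree of node `i` in the PSS tree of `S`. -/
noncomputable def subtreeSize (S : List α) (i : ℕ) : ℕ :=
  ((Finset.range (S.length + 1)).filter
    (fun j => j = i ∨ ∃ m, 0 < m ∧ (pss S)^[m] j = i)).card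

open scoped Classical in
/-- `lam S i`: length of the longest Lyndon word starting at position `i` (1-indexed). -/
noncomputable def lam (S : List α) (i : ℕ) : ℕ :=
  Nat.findGreatest (fun ℓ => IsLyndon ((S.drop (i - 1)).take ℓ)) (S.length + 1 - i)


lemma sfx_len (S : List α) {k : ℕ} (hk : 1 ≤ k) : (sfx S k).length = S.length - (k - 1) := by
  rw [sfx, if_neg (by omega : k ≠ 0)]; simp

lemma sfx_ne (S : List α) {j i : ℕ} (hj : 1 ≤ j) (hji : j < i) (hi : i ≤ S.length) :
    sfx S j ≠ sfx S i := by
  intro h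
  have h1 := sfx_len S hj
  have h2 := sfx_len S (le_trans hj hji.le)
  rw [h, h2] at h1
  omega

lemma lex_nil_sfx (S : List α) {i : ℕ} (h1 : 1 ≤ i) (h2 : i ≤ S.length) :
    List.Lex (· < ·) ([] : List α) (sfx S i) := by
  have : sfx S i ≠ [] := by
    have := sfx_len S h1
    intro h; rw [h] at this; simp at this; omega
  cases hs : sfx S i with
  | nil => exact absurd hs this
  | cons a l => exact List.Lex.nil

lemma pss_le (S : List α) (j : ℕ) : pss S j ≤ j - 1 := Nat.findGreatest_le _

lemma pss_spec (S : List α) {i : ℕ} (h1 : 1 ≤ i) (h2 : i ≤ S.length) :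
    List.Lex (· < ·) (sfx S (pss S i)) (sfx S i) := by
  classical
  have h0 : List.Lex (· < ·) (sfx S 0) (sfx S i) := by
    simpa [sfx] using lex_nil_sfx S h1 h2
  unfold pss
  exact Nat.findGreatest_spec (P := fun k => List.Lex (· < ·) (sfx S k) (sfx S i))
    (Nat.zero_le _) h0

open scoped Classical in
lemma pss_max (S : List α) {i k : ℕ} (hk : pss S i < k) (hk2 : k ≤ i - 1) :
    ¬ List.Lex (· < ·) (sfx S k) (sfx S i) :=
  Nat.findGreatest_is_greatest hk hk2

lemma key (S : List α) {i : ℕ} (h1 : 1 ≤ i) (h2 : i ≤ S.length) :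
    ∀ j, pss S i ≤ j → j ≤ i - 1 → pss S i ∈ pssClosure S j := by
  intro j
  induction j using Nat.strong_induction_on with
  | _ j ih =>
    intro hlo hhi
    rcases eq_or_lt_of_le hlo with rfl | hlt
    · exact ⟨0, rfl⟩
    · have hj1 : 1 ≤ j := by omega
      have hne : sfx S j ≠ sfx S i := sfx_ne S hj1 (by omega) h2
      have hnot : ¬ List.Lex (· < ·) (sfx S j) (sfx S i) := pss_max S hlt hhi
      have hij : List.Lex (· < ·) (sfx S i) (sfx S j) := by
        rcases trichotomous_of (List.Lex ((· < ·) : α → α → Prop)) (sfx S j) (sfx S i)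
          with h | h | h
        · exact absurd h hnot
        · exact absurd h hne
        · exact h
      have hP : List.Lex (· < ·) (sfx S (pss S i)) (sfx S j) :=
        List.lex_trans (fun h h' => lt_trans h h') (pss_spec S h1 h2) hij
      have hle : pss S i ≤ pss S j := Nat.le_findGreatest (by omega) hP
      have hplt : pss S j < j := by have := pss_le S j; omega
      obtain ⟨m, hm⟩ := ih (pss S j) hplt hle (by omega)
      exact ⟨m + 1, by rw [Function.iterate_succ_apply]; exact hm⟩

lemma iterate_pss_le (S : List α) (j m : ℕ) : (pss S)^[m] j ≤ j := by
  induction m with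
  | zero => simp
  | succ m ih =>
    rw [Function.iterate_succ_apply']
    have := pss_le S ((pss S)^[m] j)
    omega

/-- `pss i` is an element of the PSS closure of `i − 1`; more precisely it is
the greatest element `j` of `P_{i−1}` with `S_j ≺ S_i`. -/
theorem stmt4 (S : List α) (i : ℕ) (h1 : 1 ≤ i) (h2 : i ≤ S.length) :
    pss S i ∈ pssClosure S (i - 1) ∧
    IsGreatest {j | j ∈ pssClosure S (i - 1) ∧ List.Lex (· < ·) (sfx S j) (sfx S i)}
      (pss S i) := by
  have hmem : pss S i ∈ pssClosure S (i - 1) := key S h1 h2 (i - 1) (pss_le S i) le_rfl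
  refine ⟨hmem, ⟨hmem, pss_spec S h1 h2⟩, ?_⟩
  rintro j ⟨⟨m, hm⟩, hlex⟩
  have hj : j ≤ i - 1 := hm ▸ iterate_pss_le S (i - 1) m
  by_contra hgt
  exact pss_max S (by omega) hj hlex
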